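/- Let g be a finite-dimensional unimodular real Lie algebra of dimension 2n containing an abelian ideal a of codimension 2 with [g,g] ⊆ a, and J a complex structure on g with J(a) ≠ a. Suppose (g,J) admits a pluriclosed Hermitian metric. Then for every choice of x, y ∈ a with a = a_J ⊕ ℝx ⊕ ℝy, if the associated constants satisfy a + d = 0, then ad − bc ≤ 0 (that is, the induced traceless action of ad(Jx) on a/a_J has nonpositive determinant). -/

import Mathlib

open Module

section Defs

variable {L : Type*} [LieRing L] [LieAlgebra ℝ L]

/-- A complex structure on a real Lie algebra: `J² = -id` plus integrability. -/
def IsComplexStructure (J : L →ₗ[ℝ] L) : Prop :=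
  (∀ x : L, J (J x) = -x) ∧
  (∀ x y : L, ⁅x, y⁆ - ⁅J x, J y⁆ + J ⁅J x, y⁆ + J ⁅x, J y⁆ = 0)

/-- A Lie algebra is unimodular if every `ad x` is traceless. -/
def IsUnimodularLie (L : Type*) [LieRing L] [LieAlgebra ℝ L] : Prop :=
  ∀ x : L, LinearMap.trace ℝ L (LieAlgebra.ad ℝ L x) = 0

/-- A Hermitian metric on `(L, J)`: a `J`-compatible inner product. -/
structure HermMetric (J : L →ₗ[ℝ] L) : Type _ where
  B : L →ₗ[ℝ] L →ₗ[ℝ] ℝ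
  symm : ∀ x y : L, B x y = B y x
  posdef : ∀ x : L, x ≠ 0 → 0 < B x x
  compat : ∀ x y : L, B (J x) (J y) = B x y

variable {J : L →ₗ[ℝ] L}

/-- The Kähler form `ω(x,y) = ⟨Jx, y⟩`. -/
def HermMetric.omega (g : HermMetric J) (x y : L) : ℝ := g.B (J x) y

/-- Exterior differential of the Kähler form. -/
def HermMetric.dOmega (g : HermMetric J) (x y z : L) : ℝ :=
  - g.omega ⁅x, y⁆ z + g.omega ⁅x, z⁆ y - g.omega ⁅y, z⁆ x

/-- `dᶜω (x,y,z) = -dω(Jx, Jy, Jz)`. -/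
def HermMetric.dcOmega (g : HermMetric J) (x y z : L) : ℝ :=
  - g.dOmega (J x) (J y) (J z)

/-- `d(dᶜω)` as a 4-form. -/
def HermMetric.ddcOmega (g : HermMetric J) (x y z w : L) : ℝ :=
  - g.dcOmega ⁅x, y⁆ z w + g.dcOmega ⁅x, z⁆ y w - g.dcOmega ⁅x, w⁆ y z
  - g.dcOmega ⁅y, z⁆ x w + g.dcOmega ⁅y, w⁆ x z - g.dcOmega ⁅z, w⁆ x y

/-- The metric is Kähler if `dω = 0`. -/
def HermMetric.IsKahler (g : HermMetric J) : Prop :=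
  ∀ x y z : L, g.dOmega x y z = 0

/-- The metric is pluriclosed if `d(dᶜω) = 0`. -/
def HermMetric.IsPluriclosed (g : HermMetric J) : Prop :=
  ∀ x y z w : L, g.ddcOmega x y z w = 0

/-- The metric is balanced (dimension `2n`): for every orthonormal basis `f`,
`Σ_k dω(f_k, J f_k, x) = 0` for all `x`. -/
def HermMetric.IsBalanced (g : HermMetric J) (n : ℕ) : Prop :=
  ∀ f : Basis (Fin (2 * n)) ℝ L,
    (∀ i j, g.B (f i) (f j) = if i = j then 1 else 0) →
    ∀ x : L, (∑ k, g.dOmega (f k) (J (f k)) x) = 0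

end Defs

private lemma key_identity {L : Type*} [LieRing L] [LieAlgebra ℝ L] {J : L →ₗ[ℝ] L}
    (g : HermMetric J) (hJ2 : ∀ v : L, J (J v) = -v)
    (u x y α Tu TTu Su : L) (a₀ b₀ : ℝ)
    (t1 : ⁅u, J u⁆ = 0) (t2 : ⁅u, x⁆ = 0)
    (t3 : ⁅u, J x⁆ = -Tu) (t4 : ⁅J u, x⁆ = 0)
    (t5 : ⁅J u, J x⁆ = -(J Tu))
    (t6 : ⁅x, J x⁆ = -(α + a₀ • x + b₀ • y))
    (h4 : ⁅J x, u⁆ = Tu) (h5 : ⁅J x, J u⁆ = J Tu)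
    (h9 : ⁅J Tu, u⁆ = 0) (h10 : ⁅Tu, J u⁆ = 0)
    (h11 : ⁅J α, u⁆ = 0) (h12 : ⁅J α, J u⁆ = 0)
    (h13 : ⁅J y, u⁆ = Su) (h14 : ⁅J y, J u⁆ = J Su)
    (hb1 : ⁅J Tu, J x⁆ = -(J TTu)) (hb2 : ⁅Tu, J x⁆ = -TTu)
    (hb3 : ⁅J u, u⁆ = 0) :
    g.ddcOmega u (J u) x (J x)
      = 2*(g.B TTu u) + 2*(g.B Tu Tu) + 2*a₀*(g.B Tu u) + 2*b₀*(g.B Su u) := by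
  simp only [HermMetric.ddcOmega, HermMetric.dcOmega, HermMetric.dOmega, HermMetric.omega,
    t1, t2, t3, t4, t5, t6, h4, h5, h9, h10, h11, h12, h13, h14, hb1, hb2, hb3, hJ2,
    map_neg, map_add, map_smul, map_zero, lie_neg, neg_lie, lie_add, add_lie,
    lie_smul, smul_lie, zero_lie, lie_zero, lie_self,
    LinearMap.add_apply, LinearMap.neg_apply, LinearMap.smul_apply, LinearMap.zero_apply,
    LinearMap.map_smul, smul_eq_mul, g.compat]
  ring

private lemma sum_tau_nonneg {m : ℕ} (τ : Fin m → Fin m → ℝ) :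
    0 ≤ (∑ k, ∑ j, τ k j * τ j k) + (∑ k, ∑ j, τ k j * τ k j) := by
  have h2 : (0:ℝ) ≤ ∑ k, ∑ j, (τ k j + τ j k)^2 :=
    Finset.sum_nonneg fun k _ => Finset.sum_nonneg fun j _ => sq_nonneg _
  have hexp : ∀ k j : Fin m, (τ k j + τ j k)^2
      = (τ k j * τ j k + τ k j * τ k j) + (τ j k * τ k j + τ j k * τ j k) := by
    intro k j; ring
  have h3 : ∑ k, ∑ j, (τ k j + τ j k)^2
      = (∑ k, ∑ j, (τ k j * τ j k + τ k j * τ k j))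
        + (∑ k, ∑ j, (τ j k * τ k j + τ j k * τ j k)) := by
    simp_rw [hexp, Finset.sum_add_distrib]
  have h4 : ∑ k : Fin m, ∑ j : Fin m, (τ j k * τ k j + τ j k * τ j k)
      = ∑ k : Fin m, ∑ j : Fin m, (τ k j * τ j k + τ k j * τ k j) := Finset.sum_comm
  have h5 : ∑ k : Fin m, ∑ j : Fin m, (τ k j * τ j k + τ k j * τ k j)
      = (∑ k, ∑ j, τ k j * τ j k) + (∑ k, ∑ j, τ k j * τ k j) := by
    rw [← Finset.sum_add_distrib]
    exact Finset.sum_congr rfl fun k _ => by rw [← Finset.sum_add_distrib]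
  rw [h3, h4, h5] at h2
  linarith

set_option maxHeartbeats 2000000 in
theorem stmt15
    {L : Type*} [LieRing L] [LieAlgebra ℝ L] [FiniteDimensional ℝ L]
    (a : LieIdeal ℝ L)
    (habel : ∀ u ∈ a.toSubmodule, ∀ v ∈ a.toSubmodule, ⁅u, v⁆ = (0 : L))
    (hcodim : finrank ℝ ↥a.toSubmodule + 2 = finrank ℝ L)
    (J : L →ₗ[ℝ] L) (hJ : IsComplexStructure J)
    (huni : IsUnimodularLie L)
    (n : ℕ) (hdim : finrank ℝ L = 2 * n)
    (hcomm : ∀ u v : L, ⁅u, v⁆ ∈ a.toSubmodule)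
    (hJa : a.toSubmodule.map J ≠ a.toSubmodule)
    (aJ : Submodule ℝ L)
    (haJ : aJ = a.toSubmodule ⊓ a.toSubmodule.map J)
    (hplu : ∃ g : HermMetric J, g.IsPluriclosed) :
    ∀ x y : L, x ∈ a.toSubmodule → y ∈ a.toSubmodule →
      a.toSubmodule = aJ ⊔ Submodule.span ℝ {x} ⊔ Submodule.span ℝ {y} →
      (∀ (s t : ℝ) (u : L), u ∈ aJ → s • x + t • y + u = 0 → s = 0 ∧ t = 0) →
      ∀ a₀ b₀ c₀ d₀ : ℝ,
        ⁅J x, x⁆ - (a₀ • x + b₀ • y) ∈ aJ →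
        ⁅J x, y⁆ - (c₀ • x + d₀ • y) ∈ aJ →
        a₀ + d₀ = 0 →
        a₀ * d₀ - b₀ * c₀ ≤ 0 := by
  intro x y hx hy hsp hind a₀ b₀ c₀ d₀ hAx hBx had
  obtain ⟨g, hg⟩ := hplu
  have hJ2 : ∀ v : L, J (J v) = -v := hJ.1
  have hint := hJ.2
  have haJA : aJ ≤ a.toSubmodule := haJ ▸ inf_le_left
  have hJaJ : ∀ u ∈ aJ, J u ∈ aJ := by
    intro u hu
    rw [haJ] at hu ⊢
    obtain ⟨hu1, hu2⟩ := hu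
    refine ⟨?_, Submodule.mem_map_of_mem hu1⟩
    obtain ⟨w, hw, hjw⟩ := hu2
    have h : J u = -w := by rw [← hjw, hJ2]
    rw [h]; exact Submodule.neg_mem _ hw
  have hmem_aJ : ∀ v : L, v ∈ a.toSubmodule → J v ∈ a.toSubmodule → v ∈ aJ := by
    intro v hv hjv
    rw [haJ]
    refine ⟨hv, ⟨-(J v), Submodule.neg_mem _ hjv, ?_⟩⟩
    rw [map_neg, hJ2, neg_neg]
  -- ad(Jw) preserves aJ and commutes with J there
  have hTfact : ∀ w ∈ a.toSubmodule, ∀ u ∈ aJ,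
      ⁅J w, u⁆ ∈ aJ ∧ ⁅J w, J u⁆ = J ⁅J w, u⁆ := by
    intro w hw u hu
    have h0 := hint u w
    have e1 : ⁅u, w⁆ = 0 := habel u (haJA hu) w hw
    have e2 : ⁅J u, w⁆ = 0 := habel _ (haJA (hJaJ u hu)) w hw
    rw [e1, e2, map_zero, zero_sub, add_zero] at h0
    have h1 : ⁅J u, J w⁆ = J ⁅u, J w⁆ := neg_add_eq_zero.mp h0
    have hcom : ⁅J w, J u⁆ = J ⁅J w, u⁆ := by
      rw [← lie_skew (J w) (J u), h1, ← map_neg, lie_skew]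
    exact ⟨hmem_aJ _ (hcomm _ _) (by rw [← hcom]; exact hcomm _ _), hcom⟩
  have hxy_aJ : ⁅J x, y⁆ - ⁅J y, x⁆ ∈ aJ := by
    have h0 := hint x y
    have e1 : ⁅x, y⁆ = 0 := habel x hx y hy
    have e2 : J ⁅x, J y⁆ = -(J ⁅J y, x⁆) := by rw [← map_neg, lie_skew]
    have hJv : J (⁅J x, y⁆ - ⁅J y, x⁆) = ⁅J x, J y⁆ := by
      rw [map_sub]
      linear_combination (norm := module) h0 - e1 - e2
    exact hmem_aJ _ (Submodule.sub_mem _ (hcomm _ _) (hcomm _ _)) (hJv ▸ hcomm (J x) (J y))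
  -- decomposition of elements of a
  have hdecomp : ∀ w ∈ a.toSubmodule, ∃ (s t : ℝ) (v : L), v ∈ aJ ∧ w = v + s • x + t • y := by
    intro w hw
    rw [hsp] at hw
    obtain ⟨p, hp, q, hq, hpq⟩ := Submodule.mem_sup.1 hw
    obtain ⟨v, hv, r, hr, hvr⟩ := Submodule.mem_sup.1 hp
    obtain ⟨s, hs⟩ := Submodule.mem_span_singleton.1 hr
    obtain ⟨t, ht⟩ := Submodule.mem_span_singleton.1 hq
    exact ⟨s, t, v, hv, by rw [← hpq, ← hvr, ← hs, ← ht]⟩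
  have hγ : ⁅J y, x⁆ - (c₀ • x + d₀ • y) ∈ aJ := by
    have h := Submodule.sub_mem _ hBx hxy_aJ
    have e : ⁅J y, x⁆ - (c₀ • x + d₀ • y)
        = ⁅J x, y⁆ - (c₀ • x + d₀ • y) - (⁅J x, y⁆ - ⁅J y, x⁆) := by abel
    rw [e]; exact h
  obtain ⟨c₂, d₂, δ, hδ, hδeq⟩ := hdecomp ⁅J y, y⁆ (hcomm _ _)
  -- Jacobi relation
  have hjac : b₀ * c₀ + d₀ * d₀ - a₀ * d₀ - b₀ * d₂ = 0 := by
    have hj : ⁅J x, ⁅J y, x⁆⁆ = ⁅⁅J x, J y⁆, x⁆ + ⁅J y, ⁅J x, x⁆⁆ := leibniz_lie _ _ _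
    have hz : ⁅⁅J x, J y⁆, x⁆ = 0 := habel _ (hcomm _ _) x hx
    rw [hz, zero_add] at hj
    have eJyx : ⁅J y, x⁆ = (⁅J y, x⁆ - (c₀ • x + d₀ • y)) + c₀ • x + d₀ • y := by abel
    have eJxx : ⁅J x, x⁆ = (⁅J x, x⁆ - (a₀ • x + b₀ • y)) + a₀ • x + b₀ • y := by abel
    have eJxy : ⁅J x, y⁆ = (⁅J x, y⁆ - (c₀ • x + d₀ • y)) + c₀ • x + d₀ • y := by abel
    have h1 : ⁅J x, ⁅J y, x⁆⁆ = ⁅J x, ⁅J y, x⁆ - (c₀ • x + d₀ • y)⁆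
        + c₀ • ⁅J x, x⁆ + d₀ • ⁅J x, y⁆ := by
      nth_rewrite 1 [eJyx]
      rw [lie_add, lie_add, lie_smul, lie_smul]
    have h2 : ⁅J y, ⁅J x, x⁆⁆ = ⁅J y, ⁅J x, x⁆ - (a₀ • x + b₀ • y)⁆
        + a₀ • ⁅J y, x⁆ + b₀ • ⁅J y, y⁆ := by
      nth_rewrite 1 [eJxx]
      rw [lie_add, lie_add, lie_smul, lie_smul]
    have hexp : (c₀ * a₀ + d₀ * c₀ - a₀ * c₀ - b₀ * c₂) • x
        + (c₀ * b₀ + d₀ * d₀ - a₀ * d₀ - b₀ * d₂) • y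
        + (⁅J x, ⁅J y, x⁆ - (c₀ • x + d₀ • y)⁆ + c₀ • (⁅J x, x⁆ - (a₀ • x + b₀ • y))
           + d₀ • (⁅J x, y⁆ - (c₀ • x + d₀ • y)) - ⁅J y, ⁅J x, x⁆ - (a₀ • x + b₀ • y)⁆
           - a₀ • (⁅J y, x⁆ - (c₀ • x + d₀ • y)) - b₀ • δ) = 0 := by
      linear_combination (norm := module) hj - h1 + h2 + b₀ • hδeq
    have humem : (⁅J x, ⁅J y, x⁆ - (c₀ • x + d₀ • y)⁆ + c₀ • (⁅J x, x⁆ - (a₀ • x + b₀ • y))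
           + d₀ • (⁅J x, y⁆ - (c₀ • x + d₀ • y)) - ⁅J y, ⁅J x, x⁆ - (a₀ • x + b₀ • y)⁆
           - a₀ • (⁅J y, x⁆ - (c₀ • x + d₀ • y)) - b₀ • δ) ∈ aJ := by
      refine Submodule.sub_mem _ (Submodule.sub_mem _ (Submodule.sub_mem _
        (Submodule.add_mem _ (Submodule.add_mem _ ?_ ?_) ?_) ?_) ?_) ?_
      · exact (hTfact x hx _ hγ).1
      · exact Submodule.smul_mem _ _ hAx
      · exact Submodule.smul_mem _ _ hBx
      · exact (hTfact y hy _ hAx).1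
      · exact Submodule.smul_mem _ _ hγ
      · exact Submodule.smul_mem _ _ hδ
    have hcoef := hind _ _ _ humem hexp
    linarith [hcoef.2]
  -- nonvanishing facts
  have hxne : x ≠ 0 := by
    intro h
    have := (hind 1 0 0 (Submodule.zero_mem _) (by simp [h])).1
    norm_num at this
  have hyne : y ≠ 0 := by
    intro h
    have := (hind 0 1 0 (Submodule.zero_mem _) (by simp [h])).2
    norm_num at this
  have hJinj : ∀ v : L, J v = 0 → v = 0 := by
    intro v hv
    have := hJ2 v
    rw [hv, map_zero] at this
    simpa using this.symm
  have hJxne : J x ≠ 0 := fun h => hxne (hJinj x h)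
  have hJyne : J y ≠ 0 := fun h => hyne (hJinj y h)
  have hkey2 : ∀ s t : ℝ, s • (J x) + t • (J y) ∈ a.toSubmodule → s = 0 ∧ t = 0 := by
    intro s t h
    have h2 : J (s • x + t • y) ∈ a.toSubmodule := by
      rw [map_add, map_smul, map_smul]; exact h
    have h3 : s • x + t • y ∈ aJ :=
      hmem_aJ _ (Submodule.add_mem _ (Submodule.smul_mem _ _ hx) (Submodule.smul_mem _ _ hy)) h2
    exact hind s t (-(s • x + t • y)) (Submodule.neg_mem _ h3) (by abel)
  -- inner product space structure on aJ
  letI icore : InnerProductSpace.Core ℝ ↥aJ :=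
    { inner := fun u v => g.B u v
      conj_inner_symm := fun u v => by simpa using g.symm (v : L) (u : L)
      re_inner_nonneg := fun u => by
        rcases eq_or_ne ((u : L)) 0 with h | h
        · simp [h]
        · exact le_of_lt (g.posdef _ h)
      definite := fun u hu => by
        by_contra h
        exact (g.posdef (u : L) (by simpa using h)).ne' (by simpa using hu)
      add_left := fun u v w => by simp
      smul_left := fun u v r => by simp }
  letI : NormedAddCommGroup ↥aJ := icore.toNormedAddCommGroup
  letI : InnerProductSpace ℝ ↥aJ := InnerProductSpace.ofCore icore.toCore
  set m := finrank ℝ ↥aJ with hm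
  let onb : OrthonormalBasis (Fin m) ℝ ↥aJ := stdOrthonormalBasis ℝ ↥aJ
  have hexpand : ∀ v : ↥aJ, (v : L) = ∑ k, (g.B ((onb k : ↥aJ) : L) (v : L)) • ((onb k : ↥aJ) : L) := by
    intro v
    have h1 : (v : L) = ((∑ k, (inner ℝ (onb k) v : ℝ) • onb k : ↥aJ) : L) :=
      congrArg _ (onb.sum_repr' v).symm
    have h2 : ((∑ k, (inner ℝ (onb k) v : ℝ) • onb k : ↥aJ) : L)
        = ∑ k, (inner ℝ (onb k) v : ℝ) • ((onb k : ↥aJ) : L) := by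
      simp
    have h3 : (∑ k, (inner ℝ (onb k) v : ℝ) • ((onb k : ↥aJ) : L))
        = ∑ k, (g.B ((onb k : ↥aJ) : L) (v : L)) • ((onb k : ↥aJ) : L) := rfl
    exact (h1.trans h2).trans h3
  -- the adapted basis of L
  let fam : Fin m ⊕ Fin 4 → L := Sum.elim (fun k => ((onb k : ↥aJ) : L)) ![x, y, J x, J y]
  have hfam0 : fam (Sum.inr 0) = x := rfl
  have hfam1 : fam (Sum.inr 1) = y := rfl
  have hfam2 : fam (Sum.inr 2) = J x := rfl
  have hfam3 : fam (Sum.inr 3) = J y := rfl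
  have hfaml : ∀ k, fam (Sum.inl k) = ((onb k : ↥aJ) : L) := fun k => rfl
  have hLI : LinearIndependent ℝ fam := by
    rw [Fintype.linearIndependent_iff]
    intro ξ hξ
    rw [Fintype.sum_sum_type, Fin.sum_univ_four, hfam0, hfam1, hfam2, hfam3] at hξ
    simp only [hfaml] at hξ
    set u₀ : ↥aJ := ∑ k, ξ (Sum.inl k) • onb k with hu₀def
    have hcoe : ((u₀ : ↥aJ) : L) = ∑ k, ξ (Sum.inl k) • ((onb k : ↥aJ) : L) := by
      simp [hu₀def]
    have hsum' : ((u₀ : ↥aJ) : L) + ξ (Sum.inr 0) • x + ξ (Sum.inr 1) • y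
        + ξ (Sum.inr 2) • (J x) + ξ (Sum.inr 3) • (J y) = 0 := by
      rw [hcoe]
      linear_combination (norm := module) hξ
    have hstep1 : ξ (Sum.inr 2) • (J x) + ξ (Sum.inr 3) • (J y) ∈ a.toSubmodule := by
      have e : ξ (Sum.inr 2) • (J x) + ξ (Sum.inr 3) • (J y)
          = -(((u₀ : ↥aJ) : L) + ξ (Sum.inr 0) • x + ξ (Sum.inr 1) • y) := by
        linear_combination (norm := module) hsum'
      rw [e]
      exact Submodule.neg_mem _ (Submodule.add_mem _ (Submodule.add_mem _ (haJA u₀.2)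
        (Submodule.smul_mem _ _ hx)) (Submodule.smul_mem _ _ hy))
    obtain ⟨h2, h3⟩ := hkey2 _ _ hstep1
    have hstep2 : ξ (Sum.inr 0) • x + ξ (Sum.inr 1) • y + ((u₀ : ↥aJ) : L) = 0 := by
      rw [h2, h3] at hsum'
      linear_combination (norm := module) hsum'
    obtain ⟨h0, h1⟩ := hind _ _ _ u₀.2 hstep2
    have hu0 : u₀ = 0 := by
      have hc : ((u₀ : ↥aJ) : L) = 0 := by
        rw [h0, h1] at hstep2
        linear_combination (norm := module) hstep2
      exact Subtype.ext hc
    have hcoord : ∀ k, ξ (Sum.inl k) = 0 := by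
      have hlib := onb.toBasis.linearIndependent
      rw [Fintype.linearIndependent_iff] at hlib
      exact hlib (fun k => ξ (Sum.inl k))
        (by simpa [OrthonormalBasis.coe_toBasis, ← hu₀def] using hu0)
    intro i
    rcases i with k | j
    · exact hcoord k
    · fin_cases j
      · exact h0
      · exact h1
      · exact h2
      · exact h3
  have hspan : ⊤ ≤ Submodule.span ℝ (Set.range fam) := by
    have hdisj1 : a.toSubmodule ⊓ Submodule.span ℝ {J x} = ⊥ := by
      rw [Submodule.eq_bot_iff]
      rintro w ⟨hwA, hwS⟩
      obtain ⟨s, rfl⟩ := Submodule.mem_span_singleton.1 hwS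
      have := (hkey2 s 0 (by simpa using hwA)).1
      simp [this]
    have hdisj2 : (a.toSubmodule ⊔ Submodule.span ℝ {J x}) ⊓ Submodule.span ℝ {J y} = ⊥ := by
      rw [Submodule.eq_bot_iff]
      rintro w ⟨hwA, hwS⟩
      obtain ⟨s, rfl⟩ := Submodule.mem_span_singleton.1 hwS
      obtain ⟨p, hp, q, hq, hpq⟩ := Submodule.mem_sup.1 hwA
      obtain ⟨t, ht⟩ := Submodule.mem_span_singleton.1 hq
      have hmem : (-t) • (J x) + s • (J y) ∈ a.toSubmodule := by
        have e : (-t) • (J x) + s • (J y) = p := by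
          rw [← hpq, ← ht]; module
        rw [e]; exact hp
      have := (hkey2 _ _ hmem).2
      simp [this]
    have hrk1 : finrank ℝ ↥(a.toSubmodule ⊔ Submodule.span ℝ {J x})
        = finrank ℝ ↥a.toSubmodule + 1 := by
      have h := Submodule.finrank_sup_add_finrank_inf_eq a.toSubmodule (Submodule.span ℝ {J x})
      rw [hdisj1, finrank_bot, finrank_span_singleton hJxne] at h
      omega
    have hrk2 : finrank ℝ ↥(a.toSubmodule ⊔ Submodule.span ℝ {J x} ⊔ Submodule.span ℝ {J y})
        = finrank ℝ L := by
      have h := Submodule.finrank_sup_add_finrank_inf_eq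
        (a.toSubmodule ⊔ Submodule.span ℝ {J x}) (Submodule.span ℝ {J y})
      rw [hdisj2, finrank_bot, finrank_span_singleton hJyne, hrk1] at h
      omega
    have htop : a.toSubmodule ⊔ Submodule.span ℝ {J x} ⊔ Submodule.span ℝ {J y} = ⊤ :=
      Submodule.eq_top_of_finrank_eq hrk2
    rw [← htop]
    have hsub1 : aJ ≤ Submodule.span ℝ (Set.range fam) := by
      intro w hw
      have hE : w = ∑ k, (g.B ((onb k : ↥aJ) : L) w) • ((onb k : ↥aJ) : L) := hexpand ⟨w, hw⟩
      rw [hE]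
      exact Submodule.sum_mem _ fun k _ => Submodule.smul_mem _ _
        (Submodule.subset_span ⟨Sum.inl k, rfl⟩)
    have hsubx : Submodule.span ℝ {x} ≤ Submodule.span ℝ (Set.range fam) := by
      rw [Submodule.span_le]
      rintro w rfl
      exact Submodule.subset_span ⟨Sum.inr 0, rfl⟩
    have hsuby : Submodule.span ℝ {y} ≤ Submodule.span ℝ (Set.range fam) := by
      rw [Submodule.span_le]
      rintro w rfl
      exact Submodule.subset_span ⟨Sum.inr 1, rfl⟩
    have hsubJx : Submodule.span ℝ {J x} ≤ Submodule.span ℝ (Set.range fam) := by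
      rw [Submodule.span_le]
      rintro w rfl
      exact Submodule.subset_span ⟨Sum.inr 2, rfl⟩
    have hsubJy : Submodule.span ℝ {J y} ≤ Submodule.span ℝ (Set.range fam) := by
      rw [Submodule.span_le]
      rintro w rfl
      exact Submodule.subset_span ⟨Sum.inr 3, rfl⟩
    have hsubA : a.toSubmodule ≤ Submodule.span ℝ (Set.range fam) := by
      rw [hsp]
      exact sup_le (sup_le hsub1 hsubx) hsuby
    exact sup_le (sup_le hsubA hsubJx) hsubJy
  let bb : Basis (Fin m ⊕ Fin 4) ℝ L := Basis.mk hLI hspan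
  have hbb : ∀ i, bb i = fam i := fun i => Basis.mk_apply hLI hspan i
  -- coordinates of an adapted decomposition
  have hrepr : ∀ (w : L) (v : ↥aJ) (s t s' t' : ℝ),
      w = (v : L) + s • x + t • y + s' • (J x) + t' • (J y) →
      ∀ i, bb.repr w i = Sum.elim (fun k => (g.B ((onb k : ↥aJ) : L) (v : L))) ![s, t, s', t'] i := by
    intro w v s t s' t' hw i
    have h2 : bb.equivFun.symm (Sum.elim (fun k => (g.B ((onb k : ↥aJ) : L) (v : L))) ![s, t, s', t']) = w := by
      rw [Basis.equivFun_symm_apply, Fintype.sum_sum_type, Fin.sum_univ_four]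
      simp only [hbb, hfaml, hfam0, hfam1, hfam2, hfam3]
      simp only [Sum.elim_inl, Sum.elim_inr, Matrix.cons_val_zero, Matrix.cons_val_one,
        Matrix.head_cons, Matrix.cons_val_two, Matrix.cons_val_three, Matrix.tail_cons,
        Matrix.head_fin_const]
      rw [hw, ← hexpand v]
      abel
    have h3 : bb.equivFun w = Sum.elim (fun k => (g.B ((onb k : ↥aJ) : L) (v : L))) ![s, t, s', t'] := by
      rw [← h2, LinearEquiv.apply_symm_apply]
    have h4 := congrFun h3 i
    rw [Basis.equivFun_apply] at h4
    exact h4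
  -- trace via the basis bb
  have htr : ∀ f : L →ₗ[ℝ] L, LinearMap.trace ℝ L f = ∑ i, bb.repr (f (bb i)) i := by
    intro f
    rw [LinearMap.trace_eq_matrix_trace ℝ bb f, Matrix.trace]
    exact Finset.sum_congr rfl fun i _ => by rw [Matrix.diag, LinearMap.toMatrix_apply]
  -- the matrices of ad(Jx), ad(Jy) on aJ
  set τ : Fin m → Fin m → ℝ :=
    fun k j => g.B ((onb j : ↥aJ) : L) ⁅J x, ((onb k : ↥aJ) : L)⁆ with hτdef
  set σ : Fin m → Fin m → ℝ :=
    fun k j => g.B ((onb j : ↥aJ) : L) ⁅J y, ((onb k : ↥aJ) : L)⁆ with hσdef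
  obtain ⟨sw, tw, vw, hvw, hveq⟩ := hdecomp ⁅J x, J y⁆ (hcomm _ _)
  -- trace of ad(Jx)
  have htrx : (∑ k, τ k k) + a₀ + d₀ = 0 := by
    have h0 := huni (J x)
    rw [htr, Fintype.sum_sum_type, Fin.sum_univ_four] at h0
    have hl : ∀ k, bb.repr ((LieAlgebra.ad ℝ L (J x)) (bb (Sum.inl k))) (Sum.inl k) = τ k k := by
      intro k
      rw [hbb, hfaml, LieAlgebra.ad_apply]
      have hdec : ⁅J x, ((onb k : ↥aJ) : L)⁆
          = ((⟨⁅J x, ((onb k : ↥aJ) : L)⁆, (hTfact x hx _ (onb k).2).1⟩ : ↥aJ) : L)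
            + (0:ℝ) • x + (0:ℝ) • y + (0:ℝ) • (J x) + (0:ℝ) • (J y) := by
        show ⁅J x, ((onb k : ↥aJ) : L)⁆ = ⁅J x, ((onb k : ↥aJ) : L)⁆
            + (0:ℝ) • x + (0:ℝ) • y + (0:ℝ) • (J x) + (0:ℝ) • (J y)
        simp
      rw [hrepr _ _ _ _ _ _ hdec (Sum.inl k)]
      rfl
    have h00 : bb.repr ((LieAlgebra.ad ℝ L (J x)) (bb (Sum.inr 0))) (Sum.inr 0) = a₀ := by
      rw [hbb, hfam0, LieAlgebra.ad_apply]
      have hdec : ⁅J x, x⁆ = ((⟨⁅J x, x⁆ - (a₀ • x + b₀ • y), hAx⟩ : ↥aJ) : L)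
          + a₀ • x + b₀ • y + (0:ℝ) • (J x) + (0:ℝ) • (J y) := by
        show ⁅J x, x⁆ = (⁅J x, x⁆ - (a₀ • x + b₀ • y))
            + a₀ • x + b₀ • y + (0:ℝ) • (J x) + (0:ℝ) • (J y)
        rw [zero_smul, zero_smul, add_zero, add_zero]; abel
      rw [hrepr _ _ _ _ _ _ hdec (Sum.inr 0)]
      rfl
    have h01 : bb.repr ((LieAlgebra.ad ℝ L (J x)) (bb (Sum.inr 1))) (Sum.inr 1) = d₀ := by
      rw [hbb, hfam1, LieAlgebra.ad_apply]
      have hdec : ⁅J x, y⁆ = ((⟨⁅J x, y⁆ - (c₀ • x + d₀ • y), hBx⟩ : ↥aJ) : L)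
          + c₀ • x + d₀ • y + (0:ℝ) • (J x) + (0:ℝ) • (J y) := by
        show ⁅J x, y⁆ = (⁅J x, y⁆ - (c₀ • x + d₀ • y))
            + c₀ • x + d₀ • y + (0:ℝ) • (J x) + (0:ℝ) • (J y)
        rw [zero_smul, zero_smul, add_zero, add_zero]; abel
      rw [hrepr _ _ _ _ _ _ hdec (Sum.inr 1)]
      rfl
    have h02 : bb.repr ((LieAlgebra.ad ℝ L (J x)) (bb (Sum.inr 2))) (Sum.inr 2) = 0 := by
      rw [hbb, hfam2, LieAlgebra.ad_apply]
      have hdec : ⁅J x, J x⁆ = (((0 : ↥aJ) : ↥aJ) : L)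
          + (0:ℝ) • x + (0:ℝ) • y + (0:ℝ) • (J x) + (0:ℝ) • (J y) := by
        simp
      rw [hrepr _ _ _ _ _ _ hdec (Sum.inr 2)]
      rfl
    have h03 : bb.repr ((LieAlgebra.ad ℝ L (J x)) (bb (Sum.inr 3))) (Sum.inr 3) = 0 := by
      rw [hbb, hfam3, LieAlgebra.ad_apply]
      have hdec : ⁅J x, J y⁆ = ((⟨vw, hvw⟩ : ↥aJ) : L)
          + sw • x + tw • y + (0:ℝ) • (J x) + (0:ℝ) • (J y) := by
        show ⁅J x, J y⁆ = vw + sw • x + tw • y + (0:ℝ) • (J x) + (0:ℝ) • (J y)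
        rw [zero_smul, zero_smul, add_zero, add_zero, hveq]
      rw [hrepr _ _ _ _ _ _ hdec (Sum.inr 3)]
      rfl
    simp only [hl, h00, h01, h02, h03] at h0
    linarith
  -- trace of ad(Jy)
  have htry : (∑ k, σ k k) + c₀ + d₂ = 0 := by
    have h0 := huni (J y)
    rw [htr, Fintype.sum_sum_type, Fin.sum_univ_four] at h0
    have hl : ∀ k, bb.repr ((LieAlgebra.ad ℝ L (J y)) (bb (Sum.inl k))) (Sum.inl k) = σ k k := by
      intro k
      rw [hbb, hfaml, LieAlgebra.ad_apply]
      have hdec : ⁅J y, ((onb k : ↥aJ) : L)⁆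
          = ((⟨⁅J y, ((onb k : ↥aJ) : L)⁆, (hTfact y hy _ (onb k).2).1⟩ : ↥aJ) : L)
            + (0:ℝ) • x + (0:ℝ) • y + (0:ℝ) • (J x) + (0:ℝ) • (J y) := by
        show ⁅J y, ((onb k : ↥aJ) : L)⁆ = ⁅J y, ((onb k : ↥aJ) : L)⁆
            + (0:ℝ) • x + (0:ℝ) • y + (0:ℝ) • (J x) + (0:ℝ) • (J y)
        simp
      rw [hrepr _ _ _ _ _ _ hdec (Sum.inl k)]
      rfl
    have h00 : bb.repr ((LieAlgebra.ad ℝ L (J y)) (bb (Sum.inr 0))) (Sum.inr 0) = c₀ := by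
      rw [hbb, hfam0, LieAlgebra.ad_apply]
      have hdec : ⁅J y, x⁆ = ((⟨⁅J y, x⁆ - (c₀ • x + d₀ • y), hγ⟩ : ↥aJ) : L)
          + c₀ • x + d₀ • y + (0:ℝ) • (J x) + (0:ℝ) • (J y) := by
        show ⁅J y, x⁆ = (⁅J y, x⁆ - (c₀ • x + d₀ • y))
            + c₀ • x + d₀ • y + (0:ℝ) • (J x) + (0:ℝ) • (J y)
        rw [zero_smul, zero_smul, add_zero, add_zero]; abel
      rw [hrepr _ _ _ _ _ _ hdec (Sum.inr 0)]
      rfl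
    have h01 : bb.repr ((LieAlgebra.ad ℝ L (J y)) (bb (Sum.inr 1))) (Sum.inr 1) = d₂ := by
      rw [hbb, hfam1, LieAlgebra.ad_apply]
      have hdec : ⁅J y, y⁆ = ((⟨δ, hδ⟩ : ↥aJ) : L)
          + c₂ • x + d₂ • y + (0:ℝ) • (J x) + (0:ℝ) • (J y) := by
        show ⁅J y, y⁆ = δ + c₂ • x + d₂ • y + (0:ℝ) • (J x) + (0:ℝ) • (J y)
        rw [zero_smul, zero_smul, add_zero, add_zero, hδeq]
      rw [hrepr _ _ _ _ _ _ hdec (Sum.inr 1)]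
      rfl
    have h02 : bb.repr ((LieAlgebra.ad ℝ L (J y)) (bb (Sum.inr 2))) (Sum.inr 2) = 0 := by
      rw [hbb, hfam2, LieAlgebra.ad_apply]
      have hdec : ⁅J y, J x⁆ = ((⟨-vw, Submodule.neg_mem _ hvw⟩ : ↥aJ) : L)
          + (-sw) • x + (-tw) • y + (0:ℝ) • (J x) + (0:ℝ) • (J y) := by
        show ⁅J y, J x⁆ = -vw + (-sw) • x + (-tw) • y + (0:ℝ) • (J x) + (0:ℝ) • (J y)
        rw [← lie_skew (J y) (J x), hveq]
        module
      rw [hrepr _ _ _ _ _ _ hdec (Sum.inr 2)]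
      rfl
    have h03 : bb.repr ((LieAlgebra.ad ℝ L (J y)) (bb (Sum.inr 3))) (Sum.inr 3) = 0 := by
      rw [hbb, hfam3, LieAlgebra.ad_apply]
      have hdec : ⁅J y, J y⁆ = (((0 : ↥aJ) : ↥aJ) : L)
          + (0:ℝ) • x + (0:ℝ) • y + (0:ℝ) • (J x) + (0:ℝ) • (J y) := by
        simp
      rw [hrepr _ _ _ _ _ _ hdec (Sum.inr 3)]
      rfl
    simp only [hl, h00, h01, h02, h03] at h0
    linarith
  -- the pluriclosed identity per basis vector
  have hstar : ∀ k : Fin m, (∑ j, τ k j * τ j k) + (∑ j, τ k j * τ k j)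
      + a₀ * τ k k + b₀ * σ k k = 0 := by
    intro k
    have hu : ((onb k : ↥aJ) : L) ∈ aJ := (onb k).2
    have hJu : J ((onb k : ↥aJ) : L) ∈ aJ := hJaJ _ hu
    have hTumem : ⁅J x, ((onb k : ↥aJ) : L)⁆ ∈ aJ := (hTfact x hx _ hu).1
    have hTTumem : ⁅J x, ⁅J x, ((onb k : ↥aJ) : L)⁆⁆ ∈ aJ := (hTfact x hx _ hTumem).1
    have hSumem : ⁅J y, ((onb k : ↥aJ) : L)⁆ ∈ aJ := (hTfact y hy _ hu).1
    have t1 : ⁅((onb k : ↥aJ) : L), J ((onb k : ↥aJ) : L)⁆ = 0 :=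
      habel _ (haJA hu) _ (haJA hJu)
    have t2 : ⁅((onb k : ↥aJ) : L), x⁆ = 0 := habel _ (haJA hu) _ hx
    have h4 : ⁅J x, ((onb k : ↥aJ) : L)⁆ = ⁅J x, ((onb k : ↥aJ) : L)⁆ := rfl
    have h5 : ⁅J x, J ((onb k : ↥aJ) : L)⁆ = J ⁅J x, ((onb k : ↥aJ) : L)⁆ :=
      (hTfact x hx _ hu).2
    have t3 : ⁅((onb k : ↥aJ) : L), J x⁆ = -⁅J x, ((onb k : ↥aJ) : L)⁆ := by
      rw [← lie_skew ((onb k : ↥aJ) : L) (J x)]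
    have t4 : ⁅J ((onb k : ↥aJ) : L), x⁆ = 0 := habel _ (haJA hJu) _ hx
    have t5 : ⁅J ((onb k : ↥aJ) : L), J x⁆ = -(J ⁅J x, ((onb k : ↥aJ) : L)⁆) := by
      rw [← lie_skew (J ((onb k : ↥aJ) : L)) (J x), h5]
    have t6 : ⁅x, J x⁆ = -((⁅J x, x⁆ - (a₀ • x + b₀ • y)) + a₀ • x + b₀ • y) := by
      rw [← lie_skew x (J x)]
      exact neg_inj.2 (by abel)
    have h7 : ⁅J x, ⁅J x, ((onb k : ↥aJ) : L)⁆⁆ = ⁅J x, ⁅J x, ((onb k : ↥aJ) : L)⁆⁆ := rfl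
    have h8 : ⁅J x, J ⁅J x, ((onb k : ↥aJ) : L)⁆⁆ = J ⁅J x, ⁅J x, ((onb k : ↥aJ) : L)⁆⁆ :=
      (hTfact x hx _ hTumem).2
    have h9 : ⁅J ⁅J x, ((onb k : ↥aJ) : L)⁆, ((onb k : ↥aJ) : L)⁆ = 0 :=
      habel _ (haJA (hJaJ _ hTumem)) _ (haJA hu)
    have h10 : ⁅⁅J x, ((onb k : ↥aJ) : L)⁆, J ((onb k : ↥aJ) : L)⁆ = 0 :=
      habel _ (haJA hTumem) _ (haJA hJu)
    have h11 : ⁅J (⁅J x, x⁆ - (a₀ • x + b₀ • y)), ((onb k : ↥aJ) : L)⁆ = 0 :=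
      habel _ (haJA (hJaJ _ hAx)) _ (haJA hu)
    have h12 : ⁅J (⁅J x, x⁆ - (a₀ • x + b₀ • y)), J ((onb k : ↥aJ) : L)⁆ = 0 :=
      habel _ (haJA (hJaJ _ hAx)) _ (haJA hJu)
    have h13 : ⁅J y, ((onb k : ↥aJ) : L)⁆ = ⁅J y, ((onb k : ↥aJ) : L)⁆ := rfl
    have h14 : ⁅J y, J ((onb k : ↥aJ) : L)⁆ = J ⁅J y, ((onb k : ↥aJ) : L)⁆ :=
      (hTfact y hy _ hu).2
    have hb1 : ⁅J ⁅J x, ((onb k : ↥aJ) : L)⁆, J x⁆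
        = -(J ⁅J x, ⁅J x, ((onb k : ↥aJ) : L)⁆⁆) := by
      rw [← lie_skew (J ⁅J x, ((onb k : ↥aJ) : L)⁆) (J x), h8]
    have hb2 : ⁅⁅J x, ((onb k : ↥aJ) : L)⁆, J x⁆ = -⁅J x, ⁅J x, ((onb k : ↥aJ) : L)⁆⁆ := by
      rw [← lie_skew (⁅J x, ((onb k : ↥aJ) : L)⁆) (J x)]
    have hb3 : ⁅J ((onb k : ↥aJ) : L), ((onb k : ↥aJ) : L)⁆ = 0 :=
      habel _ (haJA hJu) _ (haJA hu)
    have hkey := key_identity g hJ2 ((onb k : ↥aJ) : L) x y (⁅J x, x⁆ - (a₀ • x + b₀ • y))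
      (⁅J x, ((onb k : ↥aJ) : L)⁆) (⁅J x, ⁅J x, ((onb k : ↥aJ) : L)⁆⁆)
      (⁅J y, ((onb k : ↥aJ) : L)⁆) a₀ b₀
      t1 t2 t3 t4 t5 t6 h4 h5 h9 h10 h11 h12 h13 h14 hb1 hb2 hb3
    have h0 : g.ddcOmega ((onb k : ↥aJ) : L) (J ((onb k : ↥aJ) : L)) x (J x) = 0 := hg _ _ _ _
    rw [h0] at hkey
    -- expansion of ⁅J x, u_k⁆ in the orthonormal basis
    have hTexp : ⁅J x, ((onb k : ↥aJ) : L)⁆ = ∑ j, τ k j • ((onb j : ↥aJ) : L) :=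
      hexpand ⟨⁅J x, ((onb k : ↥aJ) : L)⁆, hTumem⟩
    have hls : ⁅J x, (∑ j, τ k j • ((onb j : ↥aJ) : L))⁆
        = ∑ j, τ k j • ⁅J x, ((onb j : ↥aJ) : L)⁆ := by
      rw [show (⁅J x, (∑ j, τ k j • ((onb j : ↥aJ) : L))⁆ : L)
          = (LieAlgebra.ad ℝ L (J x)) (∑ j, τ k j • ((onb j : ↥aJ) : L)) from rfl, map_sum]
      simp [LieAlgebra.ad_apply]
    have eBTT : g.B ⁅J x, ⁅J x, ((onb k : ↥aJ) : L)⁆⁆ ((onb k : ↥aJ) : L)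
        = ∑ j, τ k j * τ j k := by
      nth_rewrite 1 [hTexp]
      rw [hls]
      rw [map_sum, LinearMap.sum_apply]
      refine Finset.sum_congr rfl fun j _ => ?_
      rw [map_smul, LinearMap.smul_apply, smul_eq_mul]
      rw [g.symm]
    have eBT2 : g.B ⁅J x, ((onb k : ↥aJ) : L)⁆ ⁅J x, ((onb k : ↥aJ) : L)⁆
        = ∑ j, τ k j * τ k j := by
      nth_rewrite 1 [hTexp]
      rw [map_sum, LinearMap.sum_apply]
      refine Finset.sum_congr rfl fun j _ => ?_
      rw [map_smul, LinearMap.smul_apply, smul_eq_mul]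
    have eBT1 : g.B ⁅J x, ((onb k : ↥aJ) : L)⁆ ((onb k : ↥aJ) : L) = τ k k := by
      rw [g.symm]
    have eBS : g.B ⁅J y, ((onb k : ↥aJ) : L)⁆ ((onb k : ↥aJ) : L) = σ k k := by
      rw [g.symm]
    rw [eBTT, eBT2, eBT1, eBS] at hkey
    linarith
  -- summing up
  have hsum0 : (∑ k, ((∑ j, τ k j * τ j k) + (∑ j, τ k j * τ k j)
      + a₀ * τ k k + b₀ * σ k k)) = 0 :=
    Finset.sum_eq_zero fun k _ => hstar k
  rw [Finset.sum_add_distrib, Finset.sum_add_distrib, Finset.sum_add_distrib,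
    ← Finset.mul_sum, ← Finset.mul_sum] at hsum0
  have hpos := sum_tau_nonneg τ
  have hT0 : (∑ k, τ k k) = 0 := by linarith
  have hS0 : (∑ k, σ k k) = -(c₀ + d₂) := by linarith
  rw [hT0, hS0] at hsum0
  have hfin : 0 ≤ b₀ * c₀ + b₀ * d₂ := by nlinarith [hsum0, hpos]
  have ha : a₀ = -d₀ := by linarith
  rw [ha] at hjac ⊢
  ring_nf at hjac ⊢
  linarith [hfin, hjac]
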